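/- Let ν be a measure on the Borel sets of ℝ which is finite on bounded sets, such that ν((x, x+1]) > 0 for all sufficiently large x and ν((x+s, x+s+1]) / ν((x, x+1]) → 1 as x → ∞ uniformly in s ∈ [0,1]. Then for every ε > 0 and C > 1 there exists x₀ such that for all x > x₀ and all h > 0, ν((x, x+h]) ≤ C ⌈h⌉ e^{ε ⌈h⌉} ν((x, x+1]). -/
import Mathlib


open MeasureTheory Filter Set
open scoped ENNReal

noncomputable section

/-- Potter-type bound: if `ν` is finite on bounded sets, `ν((x,x+1]) > 0` for all large `x`,
and `ν((x+s,x+s+1])/ν((x,x+1]) → 1` as `x → ∞` uniformly in `s ∈ [0,1]`, then for every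
`ε > 0` and `C > 1` there is `x₀` such that for all `x > x₀` and `h > 0`,
`ν((x,x+h]) ≤ C ⌈h⌉ e^{ε⌈h⌉} ν((x,x+1])`. -/
theorem interval_measure_potter_bound
    (ν : Measure ℝ)
    (hfin : ∀ a b : ℝ, ν (Set.Ioc a b) < ⊤)
    (hpos : ∀ᶠ x in atTop, 0 < ν (Set.Ioc x (x + 1)))
    (hunif : TendstoUniformlyOn
      (fun x s => (ν (Set.Ioc (x + s) (x + s + 1))).toReal / (ν (Set.Ioc x (x + 1))).toReal)
      (fun _ => 1) atTop (Set.Icc (0 : ℝ) 1)) :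
    ∀ ε > 0, ∀ C > 1, ∃ x₀ : ℝ, ∀ x > x₀, ∀ h > 0,
      (ν (Set.Ioc x (x + h))).toReal
        ≤ C * (⌈h⌉ : ℝ) * Real.exp (ε * (⌈h⌉ : ℝ)) * (ν (Set.Ioc x (x + 1))).toReal := by
  intro ε hε C hC
  have hε' : (0 : ℝ) < Real.exp ε - 1 := by
    linarith [Real.add_one_le_exp ε]
  have h1 := (Metric.tendstoUniformlyOn_iff.1 hunif) (Real.exp ε - 1) hε'
  obtain ⟨a, ha⟩ := ((h1.and hpos).exists_forall_of_atTop).imp (fun a h => h)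
  refine ⟨a, fun x hx h hh => ?_⟩
  -- basic facts for y ≥ a
  have step : ∀ y ≥ a, (ν (Set.Ioc (y + 1) (y + 1 + 1))).toReal
      ≤ Real.exp ε * (ν (Set.Ioc y (y + 1))).toReal := by
    intro y hy
    obtain ⟨hd, hp⟩ := ha y hy
    have hb : 0 < (ν (Set.Ioc y (y + 1))).toReal :=
      ENNReal.toReal_pos hp.ne' (hfin _ _).ne
    have := hd 1 (by constructor <;> norm_num)
    rw [Real.dist_eq, abs_sub_lt_iff] at this
    have hr : (ν (Set.Ioc (y + 1) (y + 1 + 1))).toReal / (ν (Set.Ioc y (y + 1))).toReal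
        ≤ Real.exp ε := by linarith [this.1]
    calc (ν (Set.Ioc (y + 1) (y + 1 + 1))).toReal
        = ((ν (Set.Ioc (y + 1) (y + 1 + 1))).toReal / (ν (Set.Ioc y (y + 1))).toReal)
          * (ν (Set.Ioc y (y + 1))).toReal := by field_simp
      _ ≤ Real.exp ε * (ν (Set.Ioc y (y + 1))).toReal := by
          exact mul_le_mul_of_nonneg_right hr hb.le
  have hxa : x ≥ a := hx.le
  -- bound on each unit interval
  have unit : ∀ k : ℕ, (ν (Set.Ioc (x + k) (x + k + 1))).toReal
      ≤ Real.exp (ε * k) * (ν (Set.Ioc x (x + 1))).toReal := by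
    intro k
    induction k with
    | zero => simp
    | succ k ih =>
      have hya : x + (k : ℝ) ≥ a := by
        have : (0:ℝ) ≤ (k:ℝ) := Nat.cast_nonneg k
        linarith
      have := step (x + k) hya
      have heq : x + ((k : ℝ) + 1) = x + k + 1 := by ring
      push_cast
      rw [heq]
      calc (ν (Set.Ioc (x + k + 1) (x + k + 1 + 1))).toReal
          ≤ Real.exp ε * (ν (Set.Ioc (x + k) (x + k + 1))).toReal := this
        _ ≤ Real.exp ε * (Real.exp (ε * k) * (ν (Set.Ioc x (x + 1))).toReal) :=
            mul_le_mul_of_nonneg_left ih (Real.exp_pos _).le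
        _ = Real.exp (ε * (k + 1)) * (ν (Set.Ioc x (x + 1))).toReal := by
            rw [← mul_assoc, ← Real.exp_add]; ring_nf
  -- bound on (x, x+n]
  have main : ∀ n : ℕ, (ν (Set.Ioc x (x + n))).toReal
      ≤ n * Real.exp (ε * n) * (ν (Set.Ioc x (x + 1))).toReal := by
    intro n
    induction n with
    | zero => simp
    | succ n ih =>
      have hsub : Set.Ioc x (x + (n + 1 : ℕ)) ⊆
          Set.Ioc x (x + n) ∪ Set.Ioc (x + n) (x + n + 1) := by
        push_cast
        intro t ht
        rcases le_or_gt t (x + n) with h' | h'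
        · exact Or.inl ⟨ht.1, h'⟩
        · exact Or.inr ⟨h', by linarith [ht.2]⟩
      have hle : (ν (Set.Ioc x (x + (n + 1 : ℕ)))).toReal
          ≤ (ν (Set.Ioc x (x + n))).toReal + (ν (Set.Ioc (x + n) (x + n + 1))).toReal := by
        rw [← ENNReal.toReal_add (hfin _ _).ne (hfin _ _).ne]
        exact ENNReal.toReal_mono
          (by exact (ENNReal.add_lt_top.2 ⟨hfin _ _, hfin _ _⟩).ne)
          ((measure_mono hsub).trans (measure_union_le _ _))
      have hmono : Real.exp (ε * n) ≤ Real.exp (ε * (n + 1)) := by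
        apply Real.exp_le_exp.2; nlinarith
      calc (ν (Set.Ioc x (x + (n + 1 : ℕ)))).toReal
          ≤ (ν (Set.Ioc x (x + n))).toReal + (ν (Set.Ioc (x + n) (x + n + 1))).toReal := hle
        _ ≤ n * Real.exp (ε * n) * (ν (Set.Ioc x (x + 1))).toReal
            + Real.exp (ε * n) * (ν (Set.Ioc x (x + 1))).toReal :=
            add_le_add ih (unit n)
        _ = (n + 1) * Real.exp (ε * n) * (ν (Set.Ioc x (x + 1))).toReal := by ring
        _ ≤ (n + 1) * Real.exp (ε * (n + 1)) * (ν (Set.Ioc x (x + 1))).toReal := by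
            have hb : 0 ≤ (ν (Set.Ioc x (x + 1))).toReal := ENNReal.toReal_nonneg
            have : (0:ℝ) ≤ (n:ℝ) + 1 := by positivity
            exact mul_le_mul_of_nonneg_right (mul_le_mul_of_nonneg_left hmono this) hb
        _ = ((n + 1 : ℕ) : ℝ) * Real.exp (ε * ((n + 1 : ℕ) : ℝ))
            * (ν (Set.Ioc x (x + 1))).toReal := by push_cast; ring
  -- conclude
  set n : ℕ := ⌈h⌉.toNat with hn
  have hn1 : 1 ≤ ⌈h⌉ := Int.one_le_ceil_iff.2 hh
  have hcast : ((⌈h⌉ : ℤ) : ℝ) = (n : ℝ) := by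
    rw [hn]; exact_mod_cast (Int.toNat_of_nonneg (by linarith)).symm
  have hhn : h ≤ (n : ℝ) := by rw [← hcast]; exact Int.le_ceil h
  have hsub : Set.Ioc x (x + h) ⊆ Set.Ioc x (x + n) := by
    intro t ht; exact ⟨ht.1, ht.2.trans (by linarith)⟩
  have h1' : (ν (Set.Ioc x (x + h))).toReal ≤ (ν (Set.Ioc x (x + n))).toReal :=
    ENNReal.toReal_mono (hfin _ _).ne (measure_mono hsub)
  have h2' := main n
  rw [hcast]
  have hb : 0 ≤ (ν (Set.Ioc x (x + 1))).toReal := ENNReal.toReal_nonneg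
  have hCn : (n : ℝ) * Real.exp (ε * n) * (ν (Set.Ioc x (x + 1))).toReal
      ≤ C * (n : ℝ) * Real.exp (ε * n) * (ν (Set.Ioc x (x + 1))).toReal := by
    have : (0:ℝ) ≤ (n:ℝ) * Real.exp (ε * n) * (ν (Set.Ioc x (x + 1))).toReal := by positivity
    nlinarith
  linarith

end
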